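/- For $\alpha \in (71/72, 1]$, let $F_\alpha$ be the orthogonal projection of $\mathbb{C}^2$ onto $\mathbb{C}(\alpha e_0 + \sqrt{1-\alpha^2}\, e_1)$, let $F_\alpha^\perp = I - F_\alpha$, and let $E$ be the projection onto $\mathbb{C} e_0$. Suppose $Q$ is a one-dimensional orthogonal projection on $\mathbb{C}^2$ and $Q^\perp = I - Q$. Then at least one of the following holds: (1) all four norms $\|F_\alpha - Q\|, \|F_\alpha - Q^\perp\|, \|F_\alpha^\perp - Q\|, \|F_\alpha^\perp - Q^\perp\|$ are $\ge 1/6$; (2) $\|E - Q\| < 1/2$ and $\|E - Q^\perp\| > 1/2$; (3) $\|E - Q^\perp\| < 1/2$ and $\|E - Q\| > 1/2$. -/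

import Mathlib

noncomputable section

/-- The two-dimensional complex Hilbert space `ℂ²`. -/
abbrev C2 : Type := EuclideanSpace ℂ (Fin 2)

/-- The first standard basis vector `e₀`. -/
def e0 : C2 := EuclideanSpace.single 0 1

/-- The second standard basis vector `e₁`. -/
def e1 : C2 := EuclideanSpace.single 1 1

/-- The rank-one operator `x ↦ ⟪v, x⟫ v`; for a unit vector `v` this is the
orthogonal projection onto `ℂ v`. -/
def projOnto (v : C2) : C2 →L[ℂ] C2 := (innerSL ℂ v).smulRight v

/-- The unit vector `f_{α,0} = α e₀ + √(1-α²) e₁`. -/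
def fvec (α : ℝ) : C2 := (α : ℂ) • e0 + ((Real.sqrt (1 - α ^ 2) : ℝ) : ℂ) • e1

open ComplexConjugate

lemma projOnto_apply (v x : C2) : projOnto v x = (inner ℂ v x : ℂ) • v := rfl

lemma isSelfAdjoint_of_symm (A : C2 →L[ℂ] C2)
    (h : ∀ x y : C2, (inner ℂ (A x) y : ℂ) = inner ℂ x (A y)) : IsSelfAdjoint A := by
  rw [ContinuousLinearMap.isSelfAdjoint_iff_isSymmetric]; exact h

lemma symm_projOnto (v x y : C2) :
    (inner ℂ (projOnto v x) y : ℂ) = inner ℂ x (projOnto v y) := by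
  simp [projOnto, inner_smul_left, inner_smul_right]

lemma sa1 (u v : C2) : IsSelfAdjoint (projOnto u - projOnto v) :=
  isSelfAdjoint_of_symm _ fun x y => by
    simp only [ContinuousLinearMap.sub_apply, inner_sub_left, inner_sub_right, symm_projOnto]

lemma sa2 (u v : C2) : IsSelfAdjoint (projOnto u - (1 - projOnto v)) :=
  isSelfAdjoint_of_symm _ fun x y => by
    simp only [ContinuousLinearMap.sub_apply, ContinuousLinearMap.one_apply,
      inner_sub_left, inner_sub_right, symm_projOnto]

lemma norm_sq_of_sq_eq (A : C2 →L[ℂ] C2) (hA : IsSelfAdjoint A) (r : ℝ) (hr : 0 ≤ r)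
    (h : A * A = ((r : ℂ)) • 1) : ‖A‖ ^ 2 = r := by
  have h1 := ContinuousLinearMap.norm_adjoint_comp_self A
  rw [hA.adjoint_eq, show A ∘L A = A * A from rfl, h,
    norm_smul ((r : ℂ)) (1 : C2 →L[ℂ] C2), norm_one, mul_one, Complex.norm_real,
    Real.norm_eq_abs, abs_of_nonneg hr] at h1
  rw [sq]; exact h1.symm

lemma scalar_real (u v : C2) :
    (1 : ℂ) - inner ℂ u v * inner ℂ v u = (((1 - ‖(inner ℂ u v : ℂ)‖ ^ 2 : ℝ)) : ℂ) := by
  have h : (inner ℂ v u : ℂ) = (starRingEnd ℂ) (inner ℂ u v : ℂ) := by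
    rw [← inner_conj_symm]
  rw [h, Complex.mul_conj, Complex.normSq_eq_norm_sq]
  push_cast
  ring

lemma inner_self_one_of_norm_one (v : C2) (hv : ‖v‖ = 1) : (inner ℂ v v : ℂ) = 1 := by
  rw [inner_self_eq_norm_sq_to_K, hv]; norm_num

lemma projOnto_idem (v : C2) (hv : (inner ℂ v v : ℂ) = 1) :
    projOnto v * projOnto v = projOnto v := by
  refine ContinuousLinearMap.ext fun x => ?_
  have hn : ‖v‖ = 1 := by
    have h := inner_self_eq_norm_sq (𝕜 := ℂ) v
    rw [hv, RCLike.one_re] at h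
    nlinarith [norm_nonneg v]
  simp [projOnto_apply, ContinuousLinearMap.mul_apply, inner_smul_right, hv, smul_smul, hn]

/-- The key 2-dimensional identity: `(P - Q)² = (1 - ⟪u,v⟫⟪v,u⟫) • 1`. -/
lemma sq_proj_sub (u v : C2) (hu : (inner ℂ u u : ℂ) = 1) (hv : (inner ℂ v v : ℂ) = 1) :
    (projOnto u - projOnto v) * (projOnto u - projOnto v)
      = ((1 : ℂ) - inner ℂ u v * inner ℂ v u) • 1 := by
  simp only [PiLp.inner_apply, RCLike.inner_apply, Fin.sum_univ_two] at hu hv ⊢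
  ext x i
  fin_cases i <;>
    simp only [Fin.zero_eta, Fin.mk_one, ContinuousLinearMap.mul_apply,
      ContinuousLinearMap.sub_apply, projOnto,
      ContinuousLinearMap.smulRight_apply, innerSL_apply_apply, ContinuousLinearMap.smul_apply,
      ContinuousLinearMap.one_apply, PiLp.smul_apply, PiLp.sub_apply, smul_eq_mul,
      PiLp.inner_apply, RCLike.inner_apply, Fin.sum_univ_two]
  · linear_combination ((conj (u 0) * x 0 + conj (u 1) * x 1) * u 0 + conj (v 1) * v 1 * x 0
        - conj (v 1) * v 0 * x 1) * hu
      + ((conj (v 0) * x 0 + conj (v 1) * x 1) * v 0 + (1 - conj (u 0) * u 0) * x 0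
        - conj (u 1) * u 0 * x 1) * hv
  · linear_combination ((conj (u 0) * x 0 + conj (u 1) * x 1) * u 1 + conj (v 0) * v 0 * x 1
        - conj (v 0) * v 1 * x 0) * hu
      + ((conj (v 0) * x 0 + conj (v 1) * x 1) * v 1 + (1 - conj (u 1) * u 1) * x 1
        - conj (u 0) * u 1 * x 0) * hv

lemma ring_idem_identity {R : Type*} [Ring R] (P Q : R) (hP : P * P = P) (hQ : Q * Q = Q) :
    (P - (1 - Q)) * (P - (1 - Q)) = 1 - (P - Q) * (P - Q) := by
  have h : (P - (1 - Q)) * (P - (1 - Q)) - (1 - (P - Q) * (P - Q))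
      = (P * P - P) + (P * P - P) + (Q * Q - Q) + (Q * Q - Q) := by noncomm_ring
  rw [hP, hQ] at h
  simp only [sub_self, add_zero] at h
  exact sub_eq_zero.mp h

lemma inner_norm_le_one (u v : C2) (hu : ‖u‖ = 1) (hv : ‖v‖ = 1) :
    ‖(inner ℂ u v : ℂ)‖ ≤ 1 := by
  have := norm_inner_le_norm (𝕜 := ℂ) u v
  rwa [hu, hv, one_mul] at this

lemma norm_sq_proj_sub (u v : C2) (hu : ‖u‖ = 1) (hv : ‖v‖ = 1) :
    ‖projOnto u - projOnto v‖ ^ 2 = 1 - ‖(inner ℂ u v : ℂ)‖ ^ 2 := by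
  have hu1 := inner_self_one_of_norm_one u hu
  have hv1 := inner_self_one_of_norm_one v hv
  refine norm_sq_of_sq_eq _ (sa1 u v) _ ?_ ?_
  · nlinarith [inner_norm_le_one u v hu hv, norm_nonneg ((inner ℂ u v : ℂ))]
  · rw [sq_proj_sub u v hu1 hv1, scalar_real]

lemma norm_sq_proj_sub' (u v : C2) (hu : ‖u‖ = 1) (hv : ‖v‖ = 1) :
    ‖projOnto u - (1 - projOnto v)‖ ^ 2 = ‖(inner ℂ u v : ℂ)‖ ^ 2 := by
  have hu1 := inner_self_one_of_norm_one u hu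
  have hv1 := inner_self_one_of_norm_one v hv
  refine norm_sq_of_sq_eq _ (sa2 u v) _ (sq_nonneg _) ?_
  rw [ring_idem_identity _ _ (projOnto_idem u hu1) (projOnto_idem v hv1),
    sq_proj_sub u v hu1 hv1, scalar_real]
  have hc : ((1:ℂ) - ((1 - ‖(inner ℂ u v : ℂ)‖ ^ 2 : ℝ) : ℂ)) = ((‖(inner ℂ u v : ℂ)‖ ^ 2 : ℝ) : ℂ) := by
    push_cast; ring
  rw [show ((1 - ‖(inner ℂ u v : ℂ)‖ ^ 2 : ℝ) : ℂ)
      = 1 - ((‖(inner ℂ u v : ℂ)‖ ^ 2 : ℝ) : ℂ) by push_cast; ring]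
  module

lemma exists_unit (Q : C2 →L[ℂ] C2) (hidem : Q ∘L Q = Q) (hsa : IsSelfAdjoint Q)
    (hrank : Module.finrank ℂ (LinearMap.range (Q : C2 →ₗ[ℂ] C2)) = 1) :
    ∃ v : C2, ‖v‖ = 1 ∧ Q = projOnto v := by
  set R := LinearMap.range (Q : C2 →ₗ[ℂ] C2) with hR
  have hne : R ≠ ⊥ := by
    intro h
    rw [h] at hrank
    simp at hrank
  obtain ⟨x, hxR, hx0⟩ := Submodule.ne_bot_iff R |>.mp hne
  set v : C2 := ((‖x‖⁻¹ : ℝ) : ℂ) • x with hv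
  have hxn : ‖x‖ ≠ 0 := norm_ne_zero_iff.mpr hx0
  have hvn : ‖v‖ = 1 := by
    rw [hv, norm_smul, Complex.norm_real, Real.norm_eq_abs, abs_inv, abs_norm]
    field_simp
  have hv0 : v ≠ 0 := by
    intro h; rw [h, norm_zero] at hvn; norm_num at hvn
  have hvR : v ∈ R := Submodule.smul_mem R _ hxR
  have hQfix : ∀ y ∈ R, Q y = y := by
    rintro y ⟨z, rfl⟩
    have := congrArg (fun T => T z) hidem
    simpa using this
  have hQv : Q v = v := hQfix v hvR
  have hle : (ℂ ∙ v) ≤ R := (Submodule.span_singleton_le_iff_mem v R).mpr hvR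
  have hspan : (ℂ ∙ v) = R := by
    apply Submodule.eq_of_le_of_finrank_eq hle
    rw [finrank_span_singleton hv0, hrank]
  have hvv : (inner ℂ v v : ℂ) = 1 := inner_self_one_of_norm_one v hvn
  have hsym := (ContinuousLinearMap.isSelfAdjoint_iff_isSymmetric).mp hsa
  refine ⟨v, hvn, ?_⟩
  refine ContinuousLinearMap.ext fun x' => ?_
  have hmem : Q x' ∈ R := ⟨x', rfl⟩
  rw [← hspan] at hmem
  obtain ⟨c, hc⟩ := Submodule.mem_span_singleton.mp hmem
  have hcval : c = (inner ℂ v x' : ℂ) := by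
    have h1 : (inner ℂ v (Q x') : ℂ) = c := by
      rw [← hc, inner_smul_right, hvv, mul_one]
    have h2 := hsym v x'
    simp only [ContinuousLinearMap.coe_coe] at h2
    rw [hQv] at h2
    rw [← h1, ← h2]
  rw [← hc, hcval]
  rfl


lemma lt_half_of_sq {n c : ℝ} (hn : 0 ≤ n) (h : n ^ 2 = c) (hc : c < 1 / 4) : n < 1 / 2 := by
  nlinarith

lemma gt_half_of_sq {n c : ℝ} (hn : 0 ≤ n) (h : n ^ 2 = c) (hc : 3 / 4 < c) : 1 / 2 < n := by
  nlinarith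

lemma ge_sixth_of_sq {n c : ℝ} (hn : 0 ≤ n) (h : n ^ 2 = c) (hc : 1 / 36 ≤ c) : 1 / 6 ≤ n := by
  nlinarith

lemma aux_beta {α β : ℝ} (h1 : 71 / 72 < α) (h2 : α ≤ 1) (hβ0 : 0 ≤ β)
    (hβsq : β ^ 2 = 1 - α ^ 2) : β ≤ 1 / 6 := by nlinarith

lemma aux_tlow {α β x0 x1 t : ℝ} (h1 : 71 / 72 < α) (hβ0 : 0 ≤ β) (hβ6 : β ≤ 1 / 6)
    (hx1n : 0 ≤ x1) (hx1u : x1 ≤ 1) (hc1 : 1 / 2 ≤ x0)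
    (hlo : α * x0 - β * x1 ≤ t) : 47 / 144 ≤ t := by
  have hax0 : 71 / 144 ≤ α * x0 := by
    nlinarith [mul_nonneg (by linarith : (0:ℝ) ≤ α - 71 / 72) (by linarith : (0:ℝ) ≤ x0 - 1 / 2)]
  have hbx : β * x1 ≤ 1 / 6 := by
    nlinarith [mul_le_mul hβ6 hx1u hx1n (by norm_num : (0:ℝ) ≤ 1 / 6)]
  linarith

lemma aux_sqlow {t : ℝ} (htn : 0 ≤ t) (h : 47 / 144 ≤ t) : 1 / 36 ≤ t ^ 2 := by nlinarith

lemma aux_rbounds {r : ℝ} (hrsq : r ^ 2 = 3) (hr0 : 0 ≤ r) : 17 / 10 ≤ r ∧ r ≤ 9 / 5 := by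
  constructor <;> nlinarith

lemma aux_x1u {x0 x1 : ℝ} (hx1n : 0 ≤ x1) (hx0n : 0 ≤ x0) (hxsum : x0 ^ 2 + x1 ^ 2 = 1) :
    x1 ≤ 1 := by nlinarith

lemma aux_x0u {x0 : ℝ} (hx0n : 0 ≤ x0) (hc2 : x0 ^ 2 ≤ 3 / 4) : x0 ≤ 1 := by nlinarith

lemma aux_x0r {x0 r : ℝ} (hx0n : 0 ≤ x0) (hc2 : x0 ^ 2 ≤ 3 / 4) (hrsq : r ^ 2 = 3)
    (hr0 : 0 ≤ r) : x0 ≤ r / 2 := by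
  nlinarith [mul_nonneg hx0n hr0]

lemma aux_x1b {x0 x1 r : ℝ} (hx0n : 0 ≤ x0) (hx1n : 0 ≤ x1) (hxsum : x0 ^ 2 + x1 ^ 2 = 1)
    (hrsq : r ^ 2 = 3) (hr0 : 0 ≤ r) (hru : r ≤ 9 / 5) (hx0u : x0 ≤ 1) :
    x1 ≤ 2 - r * x0 := by
  have hr2x : r ^ 2 * x0 ^ 2 = 3 * x0 ^ 2 := by rw [hrsq]
  have hpos : 0 < 2 - r * x0 := by nlinarith [mul_le_mul hru hx0u hx0n (by norm_num : (0:ℝ) ≤ 9/5)]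
  nlinarith [sq_nonneg (2 * x0 - r), hr2x, hpos]

lemma aux_tup {α β x0 x1 t r : ℝ} (h2 : α ≤ 1) (hβ0 : 0 ≤ β) (hβ6 : β ≤ 1 / 6)
    (hr0 : 0 ≤ r) (hrsq : r ^ 2 = 3) (hru : r ≤ 9 / 5) (h1 : 71 / 72 < α)
    (hx0r : x0 ≤ r / 2) (hx1b : x1 ≤ 2 - r * x0)
    (hup : t ≤ α * x0 + β * x1) : t ≤ 9 / 10 + 1 / 12 := by
  have hrb : r * β ≤ 3 / 10 := by
    nlinarith [mul_le_mul hru hβ6 hβ0 (by norm_num : (0:ℝ) ≤ 9 / 5)]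
  have harb : 0 ≤ α - r * β := by linarith
  have hkey : 0 ≤ (r / 2 - x0) * (α - r * β) := mul_nonneg (by linarith) harb
  have hbx1 : β * x1 ≤ β * (2 - r * x0) := mul_le_mul_of_nonneg_left hx1b hβ0
  have hr2b : r ^ 2 * β = 3 * β := by rw [hrsq]
  have htu2 : t ≤ r * α / 2 + β / 2 := by nlinarith [hkey, hbx1, hr2b, hup]
  have hra : r * α ≤ r := by nlinarith [mul_le_mul_of_nonneg_left h2 hr0]
  linarith

lemma aux_squp {t : ℝ} (htn : 0 ≤ t) (h : t ≤ 9 / 10 + 1 / 12) : t ^ 2 ≤ 35 / 36 := by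
  nlinarith

lemma scalar_main {α β x0 x1 t : ℝ} (h1 : 71 / 72 < α) (h2 : α ≤ 1) (hα0 : 0 ≤ α)
    (hβ0 : 0 ≤ β) (hβsq : β ^ 2 = 1 - α ^ 2) (hx0n : 0 ≤ x0) (hx1n : 0 ≤ x1)
    (hxsum : x0 ^ 2 + x1 ^ 2 = 1) (htn : 0 ≤ t) (hup : t ≤ α * x0 + β * x1)
    (hlo : α * x0 - β * x1 ≤ t) (hc1 : 1 / 2 ≤ x0) (hc2 : x0 ^ 2 ≤ 3 / 4) :
    1 / 36 ≤ t ^ 2 ∧ t ^ 2 ≤ 35 / 36 := by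
  have hβ6 := aux_beta h1 h2 hβ0 hβsq
  have hx1u := aux_x1u hx1n hx0n hxsum
  have hx0u := aux_x0u hx0n hc2
  obtain ⟨r, hrsq, hr0⟩ : ∃ r : ℝ, r ^ 2 = 3 ∧ 0 ≤ r :=
    ⟨Real.sqrt 3, Real.sq_sqrt (by norm_num), Real.sqrt_nonneg 3⟩
  obtain ⟨hrl, hru⟩ := aux_rbounds hrsq hr0
  refine ⟨aux_sqlow htn (aux_tlow h1 hβ0 hβ6 hx1n hx1u hc1 hlo), aux_squp htn ?_⟩
  exact aux_tup h2 hβ0 hβ6 hr0 hrsq hru h1 (aux_x0r hx0n hc2 hrsq hr0)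
    (aux_x1b hx0n hx1n hxsum hrsq hr0 hru hx0u) hup

set_option maxHeartbeats 3000000 in
/-- For `α ∈ (71/72, 1]` and any one-dimensional orthogonal
projection `Q` on `ℂ²` with complement `Q^⊥ = 1 - Q`, writing `F = F_α`,
`F^⊥ = 1 - F` and `E` for the projection onto `ℂ e₀`, one of the three
alternatives holds. -/
theorem stmt_6 (α : ℝ) (h1 : 71 / 72 < α) (h2 : α ≤ 1)
    (Q : C2 →L[ℂ] C2) (hidem : Q ∘L Q = Q) (hsa : IsSelfAdjoint Q)
    (hrank : Module.finrank ℂ (LinearMap.range (Q : C2 →ₗ[ℂ] C2)) = 1) :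
    (‖projOnto (fvec α) - Q‖ ≥ 1 / 6 ∧ ‖projOnto (fvec α) - (1 - Q)‖ ≥ 1 / 6 ∧
      ‖(1 - projOnto (fvec α)) - Q‖ ≥ 1 / 6 ∧
      ‖(1 - projOnto (fvec α)) - (1 - Q)‖ ≥ 1 / 6) ∨
    (‖projOnto e0 - Q‖ < 1 / 2 ∧ ‖projOnto e0 - (1 - Q)‖ > 1 / 2) ∨
    (‖projOnto e0 - (1 - Q)‖ < 1 / 2 ∧ ‖projOnto e0 - Q‖ > 1 / 2) := by
  obtain ⟨v, hvn, hQ⟩ := exists_unit Q hidem hsa hrank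
  subst hQ
  set β := Real.sqrt (1 - α ^ 2) with hβdef
  have hα0 : (0:ℝ) ≤ α := by linarith [h1]
  have hβ0 : (0:ℝ) ≤ β := Real.sqrt_nonneg _
  have hβsq : β ^ 2 = 1 - α ^ 2 := Real.sq_sqrt (by nlinarith)
  have hf0 : fvec α 0 = (α : ℂ) := by
    simp [fvec, e0, e1, EuclideanSpace.single_apply]
  have hf1 : fvec α 1 = (β : ℂ) := by
    simp [fvec, e0, e1, EuclideanSpace.single_apply, hβdef]
  have hffi : (inner ℂ (fvec α) (fvec α) : ℂ) = 1 := by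
    rw [PiLp.inner_apply]
    simp only [RCLike.inner_apply, Fin.sum_univ_two, hf0, hf1, Complex.conj_ofReal]
    rw [show ((α:ℂ) * α + (β:ℂ) * β) = (((α^2 + β^2):ℝ) : ℂ) by push_cast; ring, hβsq]
    norm_num
  have hfn : ‖fvec α‖ = 1 := by
    have h : ‖fvec α‖ = Real.sqrt (‖fvec α 0‖ ^ 2 + ‖fvec α 1‖ ^ 2) := by
      rw [EuclideanSpace.norm_eq, Fin.sum_univ_two]
    rw [h, hf0, hf1, Complex.norm_real, Complex.norm_real, Real.norm_eq_abs,
      Real.norm_eq_abs, sq_abs, sq_abs, hβsq,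
      show α ^ 2 + (1 - α ^ 2) = 1 by ring, Real.sqrt_one]
  have he0n : ‖e0‖ = 1 := by
    simp [e0, EuclideanSpace.norm_single]
  have hE : (inner ℂ e0 v : ℂ) = v 0 := by
    simp [e0, EuclideanSpace.inner_single_left]
  have hF : (inner ℂ (fvec α) v : ℂ) = (α : ℂ) * v 0 + (β : ℂ) * v 1 := by
    rw [PiLp.inner_apply]
    simp only [RCLike.inner_apply, Fin.sum_univ_two, hf0, hf1, Complex.conj_ofReal]
    ring
  set x0 := ‖v 0‖ with hx0def
  set x1 := ‖v 1‖ with hx1def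
  have hx0n : 0 ≤ x0 := norm_nonneg _
  have hx1n : 0 ≤ x1 := norm_nonneg _
  have hxsum : x0 ^ 2 + x1 ^ 2 = 1 := by
    have hvv := inner_self_one_of_norm_one v hvn
    rw [PiLp.inner_apply] at hvv
    simp only [RCLike.inner_apply, Fin.sum_univ_two] at hvv
    have h0 : (starRingEnd ℂ) (v 0) * v 0 = ((x0^2 : ℝ) : ℂ) := by
      rw [mul_comm, Complex.mul_conj, Complex.normSq_eq_norm_sq]
    have h1' : (starRingEnd ℂ) (v 1) * v 1 = ((x1^2 : ℝ) : ℂ) := by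
      rw [mul_comm, Complex.mul_conj, Complex.normSq_eq_norm_sq]
    rw [mul_comm (v 0), mul_comm (v 1), h0, h1'] at hvv
    exact_mod_cast hvv
  set t := ‖(inner ℂ (fvec α) v : ℂ)‖ with htdef
  have htn : 0 ≤ t := norm_nonneg _
  have hnorm_ax0 : ‖(α : ℂ) * v 0‖ = α * x0 := by
    rw [norm_mul, Complex.norm_real, Real.norm_eq_abs, abs_of_nonneg hα0]
  have hnorm_bx1 : ‖(β : ℂ) * v 1‖ = β * x1 := by
    rw [norm_mul, Complex.norm_real, Real.norm_eq_abs, abs_of_nonneg hβ0]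
  have ht_up : t ≤ α * x0 + β * x1 := by
    rw [htdef, hF]
    calc ‖(α : ℂ) * v 0 + (β : ℂ) * v 1‖ ≤ ‖(α : ℂ) * v 0‖ + ‖(β : ℂ) * v 1‖ := norm_add_le _ _
    _ = α * x0 + β * x1 := by rw [hnorm_ax0, hnorm_bx1]
  have ht_lo : α * x0 - β * x1 ≤ t := by
    have h := norm_add_le ((α : ℂ) * v 0 + (β : ℂ) * v 1) (-((β : ℂ) * v 1))
    have he : (α : ℂ) * v 0 + (β : ℂ) * v 1 + -((β : ℂ) * v 1) = (α : ℂ) * v 0 := by ring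
    rw [he, norm_neg, hnorm_ax0, hnorm_bx1] at h
    rw [htdef, hF]
    linarith
  have nE1 : ‖projOnto e0 - projOnto v‖ ^ 2 = 1 - x0 ^ 2 := by
    rw [norm_sq_proj_sub e0 v he0n hvn, hE]
  have nE2 : ‖projOnto e0 - (1 - projOnto v)‖ ^ 2 = x0 ^ 2 := by
    rw [norm_sq_proj_sub' e0 v he0n hvn, hE]
  have nF1 : ‖projOnto (fvec α) - projOnto v‖ ^ 2 = 1 - t ^ 2 :=
    norm_sq_proj_sub (fvec α) v hfn hvn
  have nF2 : ‖projOnto (fvec α) - (1 - projOnto v)‖ ^ 2 = t ^ 2 :=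
    norm_sq_proj_sub' (fvec α) v hfn hvn
  have e3 : (1 - projOnto (fvec α)) - projOnto v
      = -(projOnto (fvec α) - (1 - projOnto v)) := by abel
  have e4 : (1 - projOnto (fvec α)) - (1 - projOnto v)
      = -(projOnto (fvec α) - projOnto v) := by abel
  have nF3 : ‖(1 - projOnto (fvec α)) - projOnto v‖ ^ 2 = t ^ 2 := by
    rw [e3, norm_neg]; exact nF2
  have nF4 : ‖(1 - projOnto (fvec α)) - (1 - projOnto v)‖ ^ 2 = 1 - t ^ 2 := by
    rw [e4, norm_neg]; exact nF1
  by_cases hc1 : x0 < 1 / 2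
  · right; right
    have hsq : x0 ^ 2 < 1 / 4 := by
      rw [sq]
      have := mul_self_lt_mul_self hx0n hc1
      linarith
    refine ⟨lt_half_of_sq (norm_nonneg _) nE2 (by linarith), ?_⟩
    exact gt_half_of_sq (norm_nonneg _) nE1 (by linarith)
  by_cases hc2 : 3 / 4 < x0 ^ 2
  · right; left
    refine ⟨lt_half_of_sq (norm_nonneg _) nE1 (by linarith), ?_⟩
    exact gt_half_of_sq (norm_nonneg _) nE2 (by linarith)
  · left
    push_neg at hc1 hc2
    obtain ⟨ht2l, ht2u⟩ := scalar_main h1 h2 hα0 hβ0 hβsq hx0n hx1n hxsum htn ht_up ht_lo hc1 hc2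
    refine ⟨ge_sixth_of_sq (norm_nonneg _) nF1 (by linarith),
      ge_sixth_of_sq (norm_nonneg _) nF2 (by linarith),
      ge_sixth_of_sq (norm_nonneg _) nF3 (by linarith),
      ge_sixth_of_sq (norm_nonneg _) nF4 (by linarith)⟩

end
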